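/- arXiv:1209.2195 — 2 statements merged into one kernel-verified Lean document; each statement's English description precedes it below -/
import Mathlib

section
/- Let n ≥ 1 and let Ω be an open subset of ℂ × ℂⁿ with coordinates (t, z¹, …, zⁿ). Let Φ : Ω → ℝ be a C^∞ function; set g_{ij̄} := ∂²Φ/∂z^i∂z̄^j (1 ≤ i, j ≤ n) and assume that the Hermitian matrix g := (g_{ij̄}) is positive definite at every point of Ω; let (g^{j̄i}) denote the entries of g⁻¹. Then at every point of Ω one has the identity: −Σ_{i,j} g^{j̄i} ∂²/∂z^i∂z̄^j (∂²Φ/∂t∂t̄) = −∂²(log det g)/∂t∂t̄ − Σ_{i,j,k,s} g^{s̄i} g^{j̄k} (∂g_{ks̄}/∂t)(∂g_{ij̄}/∂t̄). -/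
open Complex
open scoped ComplexOrder

noncomputable section

/-- Wirtinger derivative `∂u/∂w` in the direction `e`. -/
def wD {E : Type*} [NormedAddCommGroup E] [NormedSpace ℂ E]
    (u : E → ℂ) (e : E) (x : E) : ℂ :=
  (1/2 : ℂ) * (fderiv ℝ u x e - Complex.I * fderiv ℝ u x (Complex.I • e))

/-- Conjugate Wirtinger derivative `∂u/∂w̄` in the direction `e`. -/
def wDbar {E : Type*} [NormedAddCommGroup E] [NormedSpace ℂ E]
    (u : E → ℂ) (e : E) (x : E) : ℂ :=
  (1/2 : ℂ) * (fderiv ℝ u x e + Complex.I * fderiv ℝ u x (Complex.I • e))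

/-- The total space `ℂ × ℂⁿ` with coordinates `(t, z¹, …, zⁿ)`. -/
abbrev Etz (n : ℕ) := ℂ × (Fin n → ℂ)

/-- The coordinate direction `∂/∂t`. -/
def dt (n : ℕ) : Etz n := (1, 0)

/-- The coordinate direction `∂/∂z^i`. -/
def dz (n : ℕ) (i : Fin n) : Etz n := (0, Pi.single i 1)

/-- The fiberwise metric `g_{ij̄} := ∂²Φ/∂z^i∂z̄^j` as a matrix-valued function. -/
def gmet {n : ℕ} (Φ : Etz n → ℝ) (x : Etz n) : Matrix (Fin n) (Fin n) ℂ :=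
  Matrix.of fun i j => wD (wDbar (fun p => (Φ p : ℂ)) (dz n j)) (dz n i) x

/-- The entries `g^{j̄i}` of the inverse metric (the first index is the row index). -/
def ginv {n : ℕ} (Φ : Etz n → ℝ) (x : Etz n) (j i : Fin n) : ℂ :=
  (gmet Φ x)⁻¹ j i

noncomputable section
variable {E : Type*} [NormedAddCommGroup E] [NormedSpace ℂ E]

/-- generalized Wirtinger operator: `c = -I` gives `wD`, `c = I` gives `wDbar`. -/
def opw (c : ℂ) (u : E → ℂ) (e : E) (x : E) : ℂ :=
  (1/2 : ℂ) * (fderiv ℝ u x e + c * fderiv ℝ u x (Complex.I • e))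

lemma opw_congr {u v : E → ℂ} (h : u =ᶠ[nhds x] v) (c : ℂ) (e : E) :
    opw c u e x = opw c v e x := by
  unfold opw; rw [h.fderiv_eq]

lemma contDiffOn_fderiv_apply {Ω : Set E} (hΩ : IsOpen Ω) {u : E → ℂ}
    (hu : ContDiffOn ℝ (⊤ : ℕ∞) u Ω) (e : E) :
    ContDiffOn ℝ (⊤ : ℕ∞) (fun y => fderiv ℝ u y e) Ω := by
  have h1 : ContDiffOn ℝ (⊤ : ℕ∞) (fun y => fderivWithin ℝ u Ω y) Ω :=
    hu.fderivWithin hΩ.uniqueDiffOn (by simp)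
  have h2 : ContDiffOn ℝ (⊤ : ℕ∞) (fun y => fderivWithin ℝ u Ω y e) Ω :=
    h1.clm_apply contDiffOn_const
  exact h2.congr (fun y hy => by rw [fderivWithin_of_isOpen hΩ hy])

lemma opw_contDiffOn {Ω : Set E} (hΩ : IsOpen Ω) {u : E → ℂ}
    (hu : ContDiffOn ℝ (⊤ : ℕ∞) u Ω) (c : ℂ) (e : E) :
    ContDiffOn ℝ (⊤ : ℕ∞) (opw c u e) Ω := by
  have h1 := contDiffOn_fderiv_apply hΩ hu e
  have h2 := contDiffOn_fderiv_apply hΩ hu (Complex.I • e)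
  exact (contDiffOn_const.mul (h1.add (contDiffOn_const.mul h2)))

end

noncomputable section
variable {E : Type*} [NormedAddCommGroup E] [NormedSpace ℂ E] {Ω : Set E} {x : E}

lemma diffAt_of_contDiffOn (hΩ : IsOpen Ω) {u : E → ℂ}
    (hu : ContDiffOn ℝ (⊤ : ℕ∞) u Ω) (hx : x ∈ Ω) : DifferentiableAt ℝ u x :=
  ((hu.contDiffAt (hΩ.mem_nhds hx)).differentiableAt (by simp))

lemma opw_add {u v : E → ℂ} (hu : DifferentiableAt ℝ u x) (hv : DifferentiableAt ℝ v x)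
    (c : ℂ) (e : E) : opw c (fun y => u y + v y) e x = opw c u e x + opw c v e x := by
  unfold opw; rw [fderiv_fun_add hu hv]; simp; ring

lemma opw_const_mul {u : E → ℂ} (hu : DifferentiableAt ℝ u x) (a c : ℂ) (e : E) :
    opw c (fun y => a * u y) e x = a * opw c u e x := by
  unfold opw; rw [fderiv_const_mul hu a]; simp; ring

lemma opw_const (a c : ℂ) (e : E) : opw c (fun _ : E => a) e x = 0 := by
  unfold opw; simp

lemma opw_mul {u v : E → ℂ} (hu : DifferentiableAt ℝ u x) (hv : DifferentiableAt ℝ v x)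
    (c : ℂ) (e : E) :
    opw c (fun y => u y * v y) e x = opw c u e x * v x + u x * opw c v e x := by
  unfold opw; rw [fderiv_fun_mul hu hv]; simp; ring

lemma opw_sum {ι : Type*} (s : Finset ι) {u : ι → E → ℂ}
    (hu : ∀ i ∈ s, DifferentiableAt ℝ (u i) x) (c : ℂ) (e : E) :
    opw c (fun y => ∑ i ∈ s, u i y) e x = ∑ i ∈ s, opw c (u i) e x := by
  unfold opw
  rw [fderiv_fun_sum hu]
  simp only [ContinuousLinearMap.coe_sum', Finset.sum_apply, Finset.mul_sum]
  rw [← Finset.sum_add_distrib, ← Finset.mul_sum]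

lemma fderiv_swap (hΩ : IsOpen Ω) {u : E → ℂ}
    (hu : ContDiffOn ℝ (⊤ : ℕ∞) u Ω) (hx : x ∈ Ω) (a b : E) :
    fderiv ℝ (fun y => fderiv ℝ u y b) x a = fderiv ℝ (fun y => fderiv ℝ u y a) x b := by
  have hat : ContDiffAt ℝ (⊤ : ℕ∞) u x := hu.contDiffAt (hΩ.mem_nhds hx)
  have hsymm : IsSymmSndFDerivAt ℝ u x := hat.isSymmSndFDerivAt (by simp [minSmoothness_of_isRCLikeNormedField]; norm_cast)
  have hd : DifferentiableAt ℝ (fderiv ℝ u) x :=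
    (hat.fderiv_right (m := 1) (by norm_cast)).differentiableAt (by simp)
  have key : ∀ w : E, fderiv ℝ (fun y => fderiv ℝ u y w) x
      = (ContinuousLinearMap.apply ℝ ℂ w).comp (fderiv ℝ (fderiv ℝ u) x) := by
    intro w
    exact (((ContinuousLinearMap.apply ℝ ℂ w).hasFDerivAt).comp x hd.hasFDerivAt).fderiv
  rw [key a, key b]
  simpa using hsymm a b

lemma opw_comm (hΩ : IsOpen Ω) {u : E → ℂ}
    (hu : ContDiffOn ℝ (⊤ : ℕ∞) u Ω) (hx : x ∈ Ω) (c c' : ℂ) (a b : E) :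
    opw c (opw c' u b) a x = opw c' (opw c u a) b x := by
  have hda : ∀ e, DifferentiableAt ℝ (fun y => fderiv ℝ u y e) x := fun e =>
    diffAt_of_contDiffOn hΩ (contDiffOn_fderiv_apply hΩ hu e) hx
  have expand : ∀ (c₀ c₁ : ℂ) (e₀ e₁ : E),
      opw c₀ (opw c₁ u e₁) e₀ x = (1/4 : ℂ) *
        ( fderiv ℝ (fun y => fderiv ℝ u y e₁) x e₀
          + c₁ * fderiv ℝ (fun y => fderiv ℝ u y (Complex.I • e₁)) x e₀
          + c₀ * fderiv ℝ (fun y => fderiv ℝ u y e₁) x (Complex.I • e₀)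
          + c₀ * c₁ * fderiv ℝ (fun y => fderiv ℝ u y (Complex.I • e₁)) x (Complex.I • e₀)) := by
    intro c₀ c₁ e₀ e₁
    have h1 : opw c₁ u e₁ = fun y => (1/2 : ℂ) *
        (fderiv ℝ u y e₁ + c₁ * fderiv ℝ u y (Complex.I • e₁)) := rfl
    rw [h1]
    unfold opw
    rw [fderiv_const_mul ((hda e₁).fun_add ((hda (Complex.I • e₁)).const_mul c₁))]
    rw [fderiv_fun_add (hda e₁) ((hda (Complex.I • e₁)).const_mul c₁)]
    rw [fderiv_const_mul (hda (Complex.I • e₁)) c₁]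
    simp only [ContinuousLinearMap.smul_apply, ContinuousLinearMap.add_apply,
      ContinuousLinearMap.coe_smul', Pi.smul_apply, smul_eq_mul]
    ring
  rw [expand, expand]
  rw [fderiv_swap hΩ hu hx, fderiv_swap hΩ hu hx (Complex.I • b) a,
    fderiv_swap hΩ hu hx b (Complex.I • a), fderiv_swap hΩ hu hx (Complex.I • b) (Complex.I • a)]
  ring
end
open Complex
noncomputable section

/-- determinant as a continuous multilinear map in the rows. -/
def detCML (n : ℕ) : ContinuousMultilinearMap ℂ (fun _ : Fin n => (Fin n → ℂ)) ℂ :=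
  (Matrix.detRowAlternating : (Fin n → ℂ) [⋀^Fin n]→ₗ[ℂ] ℂ).toMultilinearMap.mkContinuous
    (n.factorial : ℝ) (by
      intro m
      have h1 : Matrix.detRowAlternating (Matrix.of fun i j => m i j) =
          ∑ σ : Equiv.Perm (Fin n), Equiv.Perm.sign σ • ∏ i, m (σ i) i := by
        exact Matrix.det_apply (Matrix.of fun i j => m i j)
      have hm : (Matrix.detRowAlternating : (Fin n → ℂ) [⋀^Fin n]→ₗ[ℂ] ℂ).toMultilinearMap m
          = ∑ σ : Equiv.Perm (Fin n), Equiv.Perm.sign σ • ∏ i, m (σ i) i := h1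
      rw [hm]
      calc ‖∑ σ : Equiv.Perm (Fin n), Equiv.Perm.sign σ • ∏ i, m (σ i) i‖
          ≤ ∑ σ : Equiv.Perm (Fin n), ‖Equiv.Perm.sign σ • ∏ i, m (σ i) i‖ :=
            norm_sum_le _ _
        _ ≤ ∑ _σ : Equiv.Perm (Fin n), ∏ i, ‖m i‖ := by
            apply Finset.sum_le_sum
            intro σ _
            have hs : ‖Equiv.Perm.sign σ • ∏ i, m (σ i) i‖ = ‖∏ i, m (σ i) i‖ := by
              rcases Int.units_eq_one_or (Equiv.Perm.sign σ) with h | h <;> simp [h]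
            rw [hs]
            have : ‖∏ i, m (σ i) i‖ = ∏ i, ‖m (σ i) i‖ := by
              simp [norm_prod]
            rw [this]
            calc ∏ i, ‖m (σ i) i‖ ≤ ∏ i, ‖m (σ i)‖ := by
                  apply Finset.prod_le_prod (fun i _ => norm_nonneg _)
                  exact fun i _ => norm_le_pi_norm (m (σ i)) i
              _ = ∏ i, ‖m i‖ := Equiv.prod_comp σ (fun i => ‖m i‖)
        _ = (n.factorial : ℝ) * ∏ i, ‖m i‖ := by
            rw [Finset.sum_const]
            simp [Fintype.card_perm])

lemma detCML_apply (n : ℕ) (m : Fin n → Fin n → ℂ) :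
    detCML n m = Matrix.det (Matrix.of fun i j => m i j) := rfl

lemma updateRow_updateRow {n : ℕ} (A : Matrix (Fin n) (Fin n) ℂ) (i : Fin n)
    (b c : Fin n → ℂ) : (A.updateRow i b).updateRow i c = A.updateRow i c := by
  ext k l
  by_cases h : k = i <;> simp [Matrix.updateRow_apply, h]

lemma det_updateRow_eq_sum {n : ℕ} (A : Matrix (Fin n) (Fin n) ℂ) (i : Fin n)
    (b : Fin n → ℂ) :
    (A.updateRow i b).det = ∑ j, b j * A.adjugate j i := by
  rw [Matrix.det_eq_sum_mul_adjugate_row (A.updateRow i b) i]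
  apply Finset.sum_congr rfl
  intro j _
  have hadj : (A.updateRow i b).adjugate j i = A.adjugate j i := by
    rw [Matrix.adjugate_apply, Matrix.adjugate_apply, updateRow_updateRow]
  rw [Matrix.updateRow_self, hadj]
end

noncomputable section
variable {E : Type*} [NormedAddCommGroup E] [NormedSpace ℝ E]

/-- Jacobi-type formula: derivative of `y ↦ det (M y)` in direction `e`. -/
lemma hasFDerivAt_det {n : ℕ} {M : E → Matrix (Fin n) (Fin n) ℂ} {x : E}
    {M' : Fin n → Fin n → (E →L[ℝ] ℂ)}
    (h : ∀ i j, HasFDerivAt (fun y => M y i j) (M' i j) x) :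
    HasFDerivAt (fun y => (M y).det)
      (∑ i, ∑ j, ((M x).adjugate j i) • M' i j) x := by
  -- the matrix-valued map as a map into the pi type
  have hrow : ∀ i, HasFDerivAt (fun y => (fun j => M y i j))
      (ContinuousLinearMap.pi (fun j => M' i j)) x := by
    intro i
    apply hasFDerivAt_pi.2
    intro j
    exact h i j
  have hM : HasFDerivAt (fun y => (fun i j => M y i j) : E → (Fin n → Fin n → ℂ))
      (ContinuousLinearMap.pi (fun i => ContinuousLinearMap.pi (fun j => M' i j))) x :=
    hasFDerivAt_pi.2 hrow
  have hdet : HasFDerivAt (detCML n) (((detCML n).linearDeriv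
      (fun i j => M x i j)).restrictScalars ℝ) (fun i j => M x i j) :=
    (ContinuousMultilinearMap.hasFDerivAt (detCML n) (fun i j => M x i j)).restrictScalars ℝ
  have hcomp := hdet.comp x hM
  have heq : (fun y => (M y).det) = (detCML n) ∘ (fun y => (fun i j => M y i j)) := by
    funext y
    simp [detCML_apply]
    rfl
  rw [← heq] at hcomp
  refine HasFDerivAt.congr_fderiv hcomp (Eq.symm ?_)
  ext e
  simp only [ContinuousLinearMap.coe_comp', Function.comp_apply,
    ContinuousLinearMap.coe_restrictScalars', ContinuousMultilinearMap.linearDeriv_apply,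
    ContinuousLinearMap.pi_apply, ContinuousLinearMap.coe_pi,
    ContinuousLinearMap.coe_sum', Finset.sum_apply, ContinuousLinearMap.coe_smul',
    Pi.smul_apply, smul_eq_mul]
  have hupd : ∀ i, (detCML n) (Function.update (fun i j => M x i j) i (fun j => M' i j e))
      = ((M x).updateRow i (fun j => M' i j e)).det := by
    intro i
    rw [detCML_apply]
    congr 1
  refine Finset.sum_congr rfl fun i _ => ?_
  have h1 : ((ContinuousLinearMap.pi fun j => M' i j) e) = fun j => M' i j e := rfl
  rw [h1, hupd i, det_updateRow_eq_sum]
  exact Finset.sum_congr rfl fun j _ => mul_comm _ _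
end

noncomputable section
variable {E : Type*} [NormedAddCommGroup E] [NormedSpace ℝ E] {x : E}

lemma differentiableAt_det {n : ℕ} {M : E → Matrix (Fin n) (Fin n) ℂ}
    (h : ∀ i j, DifferentiableAt ℝ (fun y => M y i j) x) :
    DifferentiableAt ℝ (fun y => (M y).det) x :=
  (hasFDerivAt_det (fun i j => (h i j).hasFDerivAt)).differentiableAt

lemma differentiableAt_adjugate {n : ℕ} {M : E → Matrix (Fin n) (Fin n) ℂ}
    (h : ∀ i j, DifferentiableAt ℝ (fun y => M y i j) x) (i j : Fin n) :
    DifferentiableAt ℝ (fun y => (M y).adjugate i j) x := by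
  have heq : (fun y => (M y).adjugate i j)
      = fun y => ((M y).updateRow j (Pi.single i 1)).det := by
    funext y; rw [Matrix.adjugate_apply]
  rw [heq]
  apply differentiableAt_det
  intro k l
  have : (fun y => (M y).updateRow j (Pi.single i 1) k l)
      = fun y => ((if k = j then (Pi.single i (1:ℂ) : Fin n → ℂ) l else M y k l) : ℂ) := by
    funext y; rw [Matrix.updateRow_apply]
  rw [this]
  by_cases hkj : k = j <;> simp [hkj, h k l]

lemma differentiableAt_inv_entry {n : ℕ} {M : E → Matrix (Fin n) (Fin n) ℂ}
    (h : ∀ i j, DifferentiableAt ℝ (fun y => M y i j) x)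
    (hdet : (M x).det ≠ 0) (i j : Fin n) :
    DifferentiableAt ℝ (fun y => (M y)⁻¹ i j) x := by
  have heq : (fun y => (M y)⁻¹ i j)
      = fun y => ((M y).det)⁻¹ * (M y).adjugate i j := by
    funext y
    rw [Matrix.inv_def, Matrix.smul_apply, Ring.inverse_eq_inv', smul_eq_mul]
  rw [heq]
  exact ((differentiableAt_det h).inv hdet).mul (differentiableAt_adjugate h i j)
end
open Complex
noncomputable section
variable {E : Type*} [NormedAddCommGroup E] [NormedSpace ℂ E] {Ω : Set E} {x : E}

lemma opw_congrOn (hΩ : IsOpen Ω) {u v : E → ℂ} (h : Set.EqOn u v Ω) (hx : x ∈ Ω)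
    (c : ℂ) (e : E) : opw c u e x = opw c v e x :=
  opw_congr (h.eventuallyEq_of_mem (hΩ.mem_nhds hx)) c e

/-- commuting two pairs of Wirtinger-type operators. -/
lemma opw_comm4 (hΩ : IsOpen Ω) {u : E → ℂ} (hu : ContDiffOn ℝ (⊤ : ℕ∞) u Ω) (hx : x ∈ Ω)
    (c₁ c₂ c₃ c₄ : ℂ) (e₁ e₂ e₃ e₄ : E) :
    opw c₁ (opw c₂ (opw c₃ (opw c₄ u e₄) e₃) e₂) e₁ x
      = opw c₃ (opw c₄ (opw c₁ (opw c₂ u e₂) e₁) e₄) e₃ x := by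
  have s4 := opw_contDiffOn hΩ hu c₄ e₄
  have s2 := opw_contDiffOn hΩ hu c₂ e₂
  have s24 := opw_contDiffOn hΩ s2 c₄ e₄
  have s42 := opw_contDiffOn hΩ s4 c₂ e₂
  have step1 : opw c₁ (opw c₂ (opw c₃ (opw c₄ u e₄) e₃) e₂) e₁ x
      = opw c₁ (opw c₃ (opw c₂ (opw c₄ u e₄) e₂) e₃) e₁ x :=
    opw_congrOn hΩ (fun y hy => opw_comm hΩ s4 hy c₂ c₃ e₂ e₃) hx c₁ e₁
  have step2 : opw c₁ (opw c₃ (opw c₂ (opw c₄ u e₄) e₂) e₃) e₁ x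
      = opw c₃ (opw c₁ (opw c₂ (opw c₄ u e₄) e₂) e₁) e₃ x :=
    opw_comm hΩ (opw_contDiffOn hΩ s4 c₂ e₂) hx c₁ c₃ e₁ e₃
  have inner_eq : Set.EqOn (opw c₂ (opw c₄ u e₄) e₂) (opw c₄ (opw c₂ u e₂) e₄) Ω :=
    fun y hy => opw_comm hΩ hu hy c₂ c₄ e₂ e₄
  have step3 : opw c₃ (opw c₁ (opw c₂ (opw c₄ u e₄) e₂) e₁) e₃ x
      = opw c₃ (opw c₁ (opw c₄ (opw c₂ u e₂) e₄) e₁) e₃ x :=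
    opw_congrOn hΩ (fun y hy => opw_congrOn hΩ inner_eq hy c₁ e₁) hx c₃ e₃
  have step4 : opw c₃ (opw c₁ (opw c₄ (opw c₂ u e₂) e₄) e₁) e₃ x
      = opw c₃ (opw c₄ (opw c₁ (opw c₂ u e₂) e₁) e₄) e₃ x :=
    opw_congrOn hΩ (fun y hy => opw_comm hΩ s2 hy c₁ c₄ e₁ e₄) hx c₃ e₃
  rw [step1, step2, step3, step4]

lemma opw_det {n : ℕ} {M : E → Matrix (Fin n) (Fin n) ℂ}
    (h : ∀ i j, DifferentiableAt ℝ (fun y => M y i j) x) (c : ℂ) (e : E) :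
    opw c (fun y => (M y).det) e x
      = ∑ i, ∑ j, (M x).adjugate j i * opw c (fun y => M y i j) e x := by
  have hfd := hasFDerivAt_det (fun i j => (h i j).hasFDerivAt)
  unfold opw
  rw [hfd.fderiv]
  simp only [ContinuousLinearMap.coe_sum', Finset.sum_apply, ContinuousLinearMap.coe_smul',
    Pi.smul_apply, smul_eq_mul, Finset.mul_sum, ← Finset.sum_add_distrib]
  exact Finset.sum_congr rfl fun i _ => Finset.sum_congr rfl fun j _ => by ring
end


section WirtingerBridge
variable {E : Type*} [NormedAddCommGroup E] [NormedSpace ℂ E]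

lemma wD_eq (u : E → ℂ) (e : E) : wD u e = opw (-Complex.I) u e := by
  funext x; unfold wD opw; ring

lemma wDbar_eq (u : E → ℂ) (e : E) : wDbar u e = opw Complex.I u e := by
  funext x; unfold wDbar opw; ring
end WirtingerBridge

/-- **Equation (23).** For a smooth potential `Φ` on `Ω ⊆ ℂ × ℂⁿ` whose fiberwise complex
Hessian `g` is positive definite on `Ω`,
`-Σ g^{j̄i} ∂²(∂²Φ/∂t∂t̄)/∂z^i∂z̄^j
   = -∂²(log det g)/∂t∂t̄ - Σ g^{s̄i} g^{j̄k} (∂g_{ks̄}/∂t)(∂g_{ij̄}/∂t̄)`. -/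
theorem equation23 (n : ℕ) (hn : 1 ≤ n) (Ω : Set (Etz n)) (hΩ : IsOpen Ω)
    (Φ : Etz n → ℝ) (hΦ : ContDiffOn ℝ (⊤ : ℕ∞) Φ Ω)
    (hpos : ∀ x ∈ Ω, (gmet Φ x).PosDef) :
    ∀ x ∈ Ω,
      -(∑ i, ∑ j, ginv Φ x j i *
          wD (wDbar (wD (wDbar (fun p => (Φ p : ℂ)) (dt n)) (dt n)) (dz n j)) (dz n i) x)
        = -(wD (wDbar (fun y => (Real.log ((gmet Φ y).det.re) : ℂ)) (dt n)) (dt n) x)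
          - ∑ i, ∑ j, ∑ k, ∑ s, ginv Φ x s i * ginv Φ x j k *
              wD (fun y => gmet Φ y k s) (dt n) x * wDbar (fun y => gmet Φ y i j) (dt n) x := by
  classical
  intro x hx
  set t := dt n with ht
  set f : Etz n → ℂ := fun p => (Φ p : ℂ) with hfdef
  have hf : ContDiffOn ℝ (⊤ : ℕ∞) f Ω := Complex.ofRealCLM.contDiff.comp_contDiffOn hΦ
  set ge : Fin n → Fin n → Etz n → ℂ := fun i j y => gmet Φ y i j with hgedef
  have hge_def : ∀ i j, ge i j = opw (-Complex.I) (opw Complex.I f (dz n j)) (dz n i) := by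
    intro i j
    funext y
    show wD (wDbar f (dz n j)) (dz n i) y = _
    rw [wDbar_eq, wD_eq]
  have hge : ∀ i j, ContDiffOn ℝ (⊤ : ℕ∞) (ge i j) Ω := by
    intro i j
    rw [hge_def]
    exact opw_contDiffOn hΩ (opw_contDiffOn hΩ hf _ _) _ _
  have hent : ∀ y ∈ Ω, ∀ i j, DifferentiableAt ℝ (fun y' => gmet Φ y' i j) y :=
    fun y hy i j => diffAt_of_contDiffOn hΩ (hge i j) hy
  have hdetpos : ∀ y ∈ Ω, (0 : ℂ) < (gmet Φ y).det := fun y hy => (hpos y hy).det_pos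
  have hdetne : ∀ y ∈ Ω, (gmet Φ y).det ≠ 0 := fun y hy => (hdetpos y hy).ne'
  have hdet_real : ∀ y ∈ Ω, (((gmet Φ y).det.re : ℝ) : ℂ) = (gmet Φ y).det := by
    intro y hy
    have h1 := hdetpos y hy
    rw [Complex.lt_def] at h1
    apply Complex.ext
    · simp
    · simp [← h1.2]
  have hdet_re_pos : ∀ y ∈ Ω, 0 < (gmet Φ y).det.re := by
    intro y hy
    have h1 := hdetpos y hy
    rw [Complex.lt_def] at h1
    simpa using h1.1
  -- Step A : commutation of the four Wirtinger operators
  have hcomm : ∀ i j, wD (wDbar (wD (wDbar f t) t) (dz n j)) (dz n i) x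
      = opw (-Complex.I) (opw Complex.I (ge i j) t) t x := by
    intro i j
    rw [wDbar_eq f t, wD_eq _ t, wDbar_eq _ (dz n j), wD_eq _ (dz n i)]
    rw [opw_comm4 hΩ hf hx (-Complex.I) Complex.I (-Complex.I) Complex.I
      (dz n i) (dz n j) t t]
    rw [← hge_def]
  -- the inner first-order identity : ∂̄_t log det g = tr (g⁻¹ ∂̄_t g)
  have hinner : Set.EqOn (opw Complex.I (fun y => (Real.log ((gmet Φ y).det.re) : ℂ)) t)
      (fun y => ∑ i, ∑ j, (gmet Φ y)⁻¹ j i * opw Complex.I (ge i j) t y) Ω := by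
    intro y hy
    have hdetf : DifferentiableAt ℝ (fun y' => (gmet Φ y').det) y :=
      differentiableAt_det (hent y hy)
    set Dy := fderiv ℝ (fun y' => (gmet Φ y').det) y with hDy
    have hδdiff : HasFDerivAt (fun y' => (gmet Φ y').det.re)
        (Complex.reCLM.comp Dy) y := (Complex.reCLM.hasFDerivAt).comp y hdetf.hasFDerivAt
    have hne : (gmet Φ y).det.re ≠ 0 := (hdet_re_pos y hy).ne'
    have hlog : HasFDerivAt (fun y' => Real.log ((gmet Φ y').det.re))
        (((gmet Φ y).det.re)⁻¹ • (Complex.reCLM.comp Dy)) y :=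
      by have := (Real.hasDerivAt_log hne).comp_hasFDerivAt y hδdiff; exact this
    have hlogfn : HasFDerivAt (fun y' => ((Real.log ((gmet Φ y').det.re) : ℝ) : ℂ))
        (Complex.ofRealCLM.comp (((gmet Φ y).det.re)⁻¹ • (Complex.reCLM.comp Dy))) y :=
      (Complex.ofRealCLM.hasFDerivAt).comp y hlog
    -- Dy takes real values
    have hDyreal : ∀ e, ((Dy e).re : ℂ) = Dy e := by
      intro e
      have hev : (fun y' => (gmet Φ y').det) =ᶠ[nhds y]
          (fun y' => (((gmet Φ y').det.re : ℝ) : ℂ)) := by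
        filter_upwards [hΩ.mem_nhds hy] with z hz
        exact (hdet_real z hz).symm
      have hδd : DifferentiableAt ℝ (fun y' => (gmet Φ y').det.re) y := hδdiff.differentiableAt
      have h2 : Dy = Complex.ofRealCLM.comp (fderiv ℝ (fun y' => (gmet Φ y').det.re) y) := by
        rw [hDy, hev.fderiv_eq]
        exact ((Complex.ofRealCLM.hasFDerivAt).comp y hδd.hasFDerivAt).fderiv
      rw [h2]
      simp
    have hmain : opw Complex.I (fun y' => ((Real.log ((gmet Φ y').det.re) : ℝ) : ℂ)) t y
        = (((gmet Φ y).det.re : ℝ) : ℂ)⁻¹ * opw Complex.I (fun y' => (gmet Φ y').det) t y := by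
      unfold opw
      rw [hlogfn.fderiv, ← hDy]
      simp only [ContinuousLinearMap.coe_comp', Function.comp_apply,
        ContinuousLinearMap.coe_smul', Pi.smul_apply, smul_eq_mul,
        Complex.ofRealCLM_apply, Complex.reCLM_apply]
      push_cast
      rw [hDyreal t, hDyreal (Complex.I • t)]
      ring
    have hdet_opw : opw Complex.I (fun y' => (gmet Φ y').det) t y
        = ∑ i, ∑ j, (gmet Φ y).adjugate j i * opw Complex.I (ge i j) t y :=
      opw_det (hent y hy) Complex.I t
    rw [hmain, hdet_opw, hdet_real y hy]
    rw [Finset.mul_sum]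
    apply Finset.sum_congr rfl
    intro i _
    rw [Finset.mul_sum]
    apply Finset.sum_congr rfl
    intro j _
    have hinv_entry : (gmet Φ y)⁻¹ j i = ((gmet Φ y).det)⁻¹ * (gmet Φ y).adjugate j i := by
      rw [Matrix.inv_def, Matrix.smul_apply, Ring.inverse_eq_inv', smul_eq_mul]
    rw [hinv_entry]
    ring
  -- differentiability of inverse entries
  have hinvdiff : ∀ y ∈ Ω, ∀ k i, DifferentiableAt ℝ (fun y' => (gmet Φ y')⁻¹ k i) y :=
    fun y hy k i => differentiableAt_inv_entry (hent y hy) (hdetne y hy) k i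
  have hBdiff : ∀ i j, DifferentiableAt ℝ (opw Complex.I (ge i j) t) x := fun i j =>
    diffAt_of_contDiffOn hΩ (opw_contDiffOn hΩ (hge i j) _ _) hx
  -- derivative of the inverse metric
  set Amat : Matrix (Fin n) (Fin n) ℂ :=
    Matrix.of (fun k s => opw (-Complex.I) (ge k s) t x) with hAmat
  set Wmat : Matrix (Fin n) (Fin n) ℂ :=
    Matrix.of (fun j i => opw (-Complex.I) (fun y => (gmet Φ y)⁻¹ j i) t x) with hWmat
  have hunit : IsUnit (gmet Φ x).det := isUnit_iff_ne_zero.2 (hdetne x hx)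
  have hGinv_id : ∀ j i : Fin n, Set.EqOn (fun y => ∑ k, ge j k y * (gmet Φ y)⁻¹ k i)
      (fun _ => ((1 : Matrix (Fin n) (Fin n) ℂ) j i)) Ω := by
    intro j i y hy
    have h1 : gmet Φ y * (gmet Φ y)⁻¹ = 1 :=
      Matrix.mul_nonsing_inv _ (isUnit_iff_ne_zero.2 (hdetne y hy))
    have h2 := congrArg (fun A : Matrix (Fin n) (Fin n) ℂ => A j i) h1
    simpa [Matrix.mul_apply] using h2
  have hstep1 : gmet Φ x * Wmat = -(Amat * (gmet Φ x)⁻¹) := by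
    ext j i
    have h0 : opw (-Complex.I) (fun y => ∑ k, ge j k y * (gmet Φ y)⁻¹ k i) t x = 0 := by
      rw [opw_congrOn hΩ (hGinv_id j i) hx]
      exact opw_const _ _ _
    rw [opw_sum Finset.univ (fun k _ =>
      ((diffAt_of_contDiffOn hΩ (hge j k) hx).fun_mul (hinvdiff x hx k i))) (-Complex.I) t] at h0
    have h1 : ∀ k : Fin n, opw (-Complex.I) (fun y => ge j k y * (gmet Φ y)⁻¹ k i) t x
        = Amat j k * (gmet Φ x)⁻¹ k i + gmet Φ x j k * Wmat k i := by
      intro k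
      rw [opw_mul (diffAt_of_contDiffOn hΩ (hge j k) hx) (hinvdiff x hx k i)]
      rfl
    rw [Finset.sum_congr rfl (fun k _ => h1 k), Finset.sum_add_distrib] at h0
    have h2 : (gmet Φ x * Wmat) j i = ∑ k, gmet Φ x j k * Wmat k i := Matrix.mul_apply
    have h3 : (-(Amat * (gmet Φ x)⁻¹)) j i = -∑ k, Amat j k * (gmet Φ x)⁻¹ k i := by
      rw [Matrix.neg_apply, Matrix.mul_apply]
    rw [h2, h3]
    linear_combination h0
  have hstep2 : Wmat = -((gmet Φ x)⁻¹ * Amat * (gmet Φ x)⁻¹) := by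
    have hIG : (gmet Φ x)⁻¹ * gmet Φ x = 1 := Matrix.nonsing_inv_mul _ hunit
    calc Wmat = ((gmet Φ x)⁻¹ * gmet Φ x) * Wmat := by rw [hIG, Matrix.one_mul]
      _ = (gmet Φ x)⁻¹ * (gmet Φ x * Wmat) := by rw [Matrix.mul_assoc]
      _ = (gmet Φ x)⁻¹ * (-(Amat * (gmet Φ x)⁻¹)) := by rw [hstep1]
      _ = -((gmet Φ x)⁻¹ * Amat * (gmet Φ x)⁻¹) := by
          rw [Matrix.mul_neg, Matrix.mul_assoc]
  have hWi : ∀ j i : Fin n, Wmat j i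
      = -∑ s, ∑ k, (gmet Φ x)⁻¹ j k * Amat k s * (gmet Φ x)⁻¹ s i := by
    intro j i
    rw [hstep2]
    rw [Matrix.neg_apply, Matrix.mul_apply]
    congr 1
    apply Finset.sum_congr rfl
    intro s _
    rw [Matrix.mul_apply, Finset.sum_mul]
  -- the outer derivative of the log-det term
  have hW : wD (wDbar (fun y => (Real.log ((gmet Φ y).det.re) : ℂ)) t) t x
      = ∑ i, ∑ j, (Wmat j i * opw Complex.I (ge i j) t x
          + (gmet Φ x)⁻¹ j i * opw (-Complex.I) (opw Complex.I (ge i j) t) t x) := by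
    rw [wD_eq, wDbar_eq]
    rw [opw_congrOn hΩ hinner hx]
    rw [opw_sum Finset.univ (fun i _ => DifferentiableAt.fun_sum
      (fun j _ => (hinvdiff x hx j i).fun_mul (hBdiff i j))) (-Complex.I) t]
    apply Finset.sum_congr rfl
    intro i _
    rw [opw_sum Finset.univ (fun j _ => (hinvdiff x hx j i).fun_mul (hBdiff i j)) (-Complex.I) t]
    apply Finset.sum_congr rfl
    intro j _
    rw [opw_mul (hinvdiff x hx j i) (hBdiff i j)]
    rfl
  -- put everything together
  have hT : ∀ i j : Fin n, wD (wDbar (wD (wDbar (fun p => (Φ p : ℂ)) t) t) (dz n j)) (dz n i) x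
      = opw (-Complex.I) (opw Complex.I (ge i j) t) t x := hcomm
  rw [hW]
  have hS : ∑ i, ∑ j, ∑ k, ∑ s, ginv Φ x s i * ginv Φ x j k *
        wD (fun y => gmet Φ y k s) t x * wDbar (fun y => gmet Φ y i j) t x
      = ∑ i, ∑ j, (∑ s, ∑ k, (gmet Φ x)⁻¹ j k * Amat k s * (gmet Φ x)⁻¹ s i)
          * opw Complex.I (ge i j) t x := by
    apply Finset.sum_congr rfl
    intro i _
    apply Finset.sum_congr rfl
    intro j _
    conv_lhs => rw [Finset.sum_comm]
    rw [Finset.sum_mul]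
    apply Finset.sum_congr rfl
    intro s _
    rw [Finset.sum_mul]
    apply Finset.sum_congr rfl
    intro k _
    have h1 : wD (fun y => gmet Φ y k s) t x = Amat k s := by
      rw [wD_eq]; rfl
    have h2 : wDbar (fun y => gmet Φ y i j) t x = opw Complex.I (ge i j) t x := by
      rw [wDbar_eq]
    rw [h1, h2]
    show ginv Φ x s i * ginv Φ x j k * Amat k s * opw Complex.I (ge i j) t x
      = (gmet Φ x)⁻¹ j k * Amat k s * (gmet Φ x)⁻¹ s i * opw Complex.I (ge i j) t x
    unfold ginv
    ring
  rw [hS]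
  have hTT : ∀ i j : Fin n, ginv Φ x j i *
      wD (wDbar (wD (wDbar (fun p => (Φ p : ℂ)) t) t) (dz n j)) (dz n i) x
      = (gmet Φ x)⁻¹ j i * opw (-Complex.I) (opw Complex.I (ge i j) t) t x := by
    intro i j
    rw [hT i j]
    rfl
  rw [← hfdef] at hTT
  simp only [Finset.sum_congr rfl (fun (i : Fin n) _ => Finset.sum_congr rfl
    (fun (j : Fin n) _ => hTT i j))]
  simp only [Finset.sum_add_distrib, neg_add]
  have hcancel : ∑ i, ∑ j, Wmat j i * opw Complex.I (ge i j) t x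
      = -∑ i, ∑ j, (∑ s, ∑ k, (gmet Φ x)⁻¹ j k * Amat k s * (gmet Φ x)⁻¹ s i)
          * opw Complex.I (ge i j) t x := by
    rw [← Finset.sum_neg_distrib]
    apply Finset.sum_congr rfl
    intro i _
    rw [← Finset.sum_neg_distrib]
    apply Finset.sum_congr rfl
    intro j _
    rw [hWi j i]
    ring
  rw [hcancel]
  ring

end
end

section
/- Let n ≥ 1 and let Ω be an open subset of ℂ × ℂⁿ with coordinates (t, z¹, …, zⁿ). Let Φ : Ω → ℝ be a C^∞ function; set g_{ij̄} := ∂²Φ/∂z^i∂z̄^j (1 ≤ i, j ≤ n) and assume g := (g_{ij̄}) is positive definite at every point of Ω; let (g^{j̄i}) denote the entries of g⁻¹. Let ψ : Ω → ℝ be C^∞ with log det g = Φ − ψ on Ω, and write g_{tᾱ} := ∂²Φ/∂t∂z̄^α, g_{γt̄} := ∂²Φ/∂z^γ∂t̄. Suppose that at p₀ ∈ Ω all first-order derivatives ∂g_{ij̄}/∂z^k (p₀) vanish. Then at p₀: Σ_{i,j,α,γ} g^{j̄i} g^{ᾱγ} g_{tᾱ} · ∂²(g_{γt̄})/∂z^i∂z̄^j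 = Σ_{α,γ} g_{tᾱ} g^{ᾱγ} ( g_{γt̄} − ∂²ψ/∂z^γ∂t̄ ). -/
open Complex
open scoped ComplexOrder

noncomputable section

namespace I2Aux

variable {E : Type*} [NormedAddCommGroup E] [NormedSpace ℂ E]
variable {F : Type*} [NormedAddCommGroup F] [NormedSpace ℝ F]

/-- real directional derivative -/
def dD (u : E → F) (e : E) (x : E) : F := fderiv ℝ u x e

/-- the smoothness notion we use -/
def SmOn (u : E → F) (Ω : Set E) : Prop := ∀ x ∈ Ω, ContDiffAt ℝ (⊤:ℕ∞) u x

section basic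
variable {Ω : Set E}

theorem SmOn.dD {u : E → F} (hu : SmOn u Ω) (e : E) : SmOn (dD u e) Ω := by
  intro x hx
  have h1 : ContDiffAt ℝ (⊤:ℕ∞) (fderiv ℝ u) x := (hu x hx).fderiv_right (le_refl _)
  exact (ContinuousLinearMap.apply ℝ F e).contDiff.contDiffAt.comp x h1

theorem SmOn.diffAt {u : E → F} (hu : SmOn u Ω) {x : E} (hx : x ∈ Ω) :
    DifferentiableAt ℝ u x :=
  (hu x hx).differentiableAt (by simp)

theorem dD_congr (hΩ : IsOpen Ω) {u v : E → F} {x : E} (hx : x ∈ Ω)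
    (h : ∀ y ∈ Ω, u y = v y) (e : E) : dD u e x = dD v e x := by
  unfold dD
  rw [Filter.EventuallyEq.fderiv_eq (Filter.eventuallyEq_of_mem (hΩ.mem_nhds hx) h)]

theorem dD_swap (hΩ : IsOpen Ω) {u : E → F} (hu : SmOn u Ω) {x : E} (hx : x ∈ Ω) (a b : E) :
    dD (dD u b) a x = dD (dD u a) b x := by
  have hsymm : IsSymmSndFDerivAt ℝ u x :=
    (hu x hx).isSymmSndFDerivAt (by simp; exact WithTop.coe_le_coe.mpr le_top)
  have hdiff : DifferentiableAt ℝ (fderiv ℝ u) x :=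
    ((hu x hx).fderiv_right (le_refl _) :
      ContDiffAt ℝ (⊤:ℕ∞) (fderiv ℝ u) x).differentiableAt (by simp)
  have key : ∀ c d : E, dD (dD u c) d x = fderiv ℝ (fderiv ℝ u) x d c := by
    intro c d
    show fderiv ℝ (fun y => fderiv ℝ u y c) x d = _
    rw [fderiv_clm_apply hdiff (differentiableAt_const c)]
    simp
  rw [key b a, key a b, hsymm.eq]

theorem dD_clm {M N : Type*} [NormedAddCommGroup M] [NormedSpace ℝ M]
    [NormedAddCommGroup N] [NormedSpace ℝ N] (T : M →L[ℝ] N) {v : E → M} {x : E}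
    (hv : DifferentiableAt ℝ v x) (a : E) :
    dD (fun y => T (v y)) a x = T (dD v a x) := by
  show fderiv ℝ (T ∘ v) x a = _
  rw [(T.hasFDerivAt.comp x hv.hasFDerivAt).fderiv]
  rfl

end basic

section lin
variable {Ω : Set E} {u v : E → ℂ} {x e : E}

theorem dD_add (hu : DifferentiableAt ℝ u x) (hv : DifferentiableAt ℝ v x) (e : E) :
    dD (fun y => u y + v y) e x = dD u e x + dD v e x := by
  unfold dD; rw [fderiv_fun_add hu hv]; rfl

theorem dD_sub (hu : DifferentiableAt ℝ u x) (hv : DifferentiableAt ℝ v x) (e : E) :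
    dD (fun y => u y - v y) e x = dD u e x - dD v e x := by
  unfold dD; rw [fderiv_fun_sub hu hv]; rfl

theorem dD_const_mul (hu : DifferentiableAt ℝ u x) (c : ℂ) (e : E) :
    dD (fun y => c * u y) e x = c * dD u e x := by
  unfold dD; rw [fderiv_const_mul hu c]; rfl

theorem dD_mul (hu : DifferentiableAt ℝ u x) (hv : DifferentiableAt ℝ v x) (e : E) :
    dD (fun y => u y * v y) e x = dD u e x * v x + u x * dD v e x := by
  unfold dD; rw [fderiv_fun_mul hu hv]; simp; ring

theorem dD_sum {ι : Type*} {s : Finset ι} {f : ι → E → ℂ}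
    (h : ∀ i ∈ s, DifferentiableAt ℝ (f i) x) (e : E) :
    dD (fun y => ∑ i ∈ s, f i y) e x = ∑ i ∈ s, dD (f i) e x := by
  unfold dD; rw [fderiv_fun_sum h]; simp

/-- unified Wirtinger operator: c = -1 gives wD, c = 1 gives wDbar -/
def wOp (c : ℂ) (u : E → ℂ) (e : E) (x : E) : ℂ :=
  (1/2 : ℂ) * (dD u e x + c * Complex.I * dD u (Complex.I • e) x)

theorem wOp_neg_one (u : E → ℂ) (e : E) (x : E) : wOp (-1) u e x = wD u e x := by
  unfold wOp wD dD; ring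

theorem wOp_one (u : E → ℂ) (e : E) (x : E) : wOp 1 u e x = wDbar u e x := by
  unfold wOp wDbar dD; ring

theorem wD_eq_wOp (u : E → ℂ) (e : E) : wD u e = wOp (-1) u e :=
  funext fun x => (wOp_neg_one u e x).symm

theorem wDbar_eq_wOp (u : E → ℂ) (e : E) : wDbar u e = wOp 1 u e :=
  funext fun x => (wOp_one u e x).symm

theorem wD_wDbar_eq_wOp (u : E → ℂ) (a b : E) :
    wD (wDbar u b) a = wOp (-1) (wOp 1 u b) a := by
  rw [wDbar_eq_wOp, wD_eq_wOp]

theorem wOp_smOn {u : E → ℂ} (hu : SmOn u Ω) (c : ℂ) (e : E) : SmOn (wOp c u e) Ω := by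
  intro x hx
  exact contDiffAt_const.mul (((hu.dD e) x hx).add
    (contDiffAt_const.mul ((hu.dD (Complex.I • e)) x hx)))

theorem wOp_congr (hΩ : IsOpen Ω) {u v : E → ℂ} {x : E} (hx : x ∈ Ω)
    (h : ∀ y ∈ Ω, u y = v y) (c : ℂ) (e : E) : wOp c u e x = wOp c v e x := by
  unfold wOp
  rw [dD_congr hΩ hx h, dD_congr hΩ hx h]

theorem wOp_add (hu : DifferentiableAt ℝ u x) (hv : DifferentiableAt ℝ v x) (c : ℂ) (e : E) :
    wOp c (fun y => u y + v y) e x = wOp c u e x + wOp c v e x := by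
  unfold wOp
  rw [dD_add hu hv, dD_add hu hv]
  ring

theorem wOp_sub (hu : DifferentiableAt ℝ u x) (hv : DifferentiableAt ℝ v x) (c : ℂ) (e : E) :
    wOp c (fun y => u y - v y) e x = wOp c u e x - wOp c v e x := by
  unfold wOp
  rw [dD_sub hu hv, dD_sub hu hv]
  ring

theorem wOp_mul (hu : DifferentiableAt ℝ u x) (hv : DifferentiableAt ℝ v x) (c : ℂ) (e : E) :
    wOp c (fun y => u y * v y) e x = wOp c u e x * v x + u x * wOp c v e x := by
  unfold wOp
  rw [dD_mul hu hv, dD_mul hu hv]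
  ring

theorem wOp_sum {ι : Type*} {s : Finset ι} {f : ι → E → ℂ}
    (h : ∀ i ∈ s, DifferentiableAt ℝ (f i) x) (c : ℂ) (e : E) :
    wOp c (fun y => ∑ i ∈ s, f i y) e x = ∑ i ∈ s, wOp c (f i) e x := by
  unfold wOp
  rw [dD_sum h, dD_sum h, Finset.mul_sum (a := c * Complex.I), ← Finset.sum_add_distrib,
    Finset.mul_sum]

theorem dD_wOp (hΩ : IsOpen Ω) {u : E → ℂ} (hu : SmOn u Ω) {x : E} (hx : x ∈ Ω)
    (c' : ℂ) (a b : E) :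
    dD (wOp c' u b) a x
      = (1/2 : ℂ) * (dD (dD u b) a x + c' * Complex.I * dD (dD u (Complex.I • b)) a x) := by
  have hb := (hu.dD b).diffAt hx
  have hib := (hu.dD (Complex.I • b)).diffAt hx
  show dD (fun y => (1/2 : ℂ) * (dD u b y + c' * Complex.I * dD u (Complex.I • b) y)) a x = _
  rw [dD_const_mul (u := fun y => dD u b y + c' * Complex.I * dD u (Complex.I • b) y)
      (hb.add (hib.const_mul _)), dD_add hb (hib.const_mul _),
    dD_const_mul hib]

theorem wOp_comm (hΩ : IsOpen Ω) {u : E → ℂ} (hu : SmOn u Ω) {x : E} (hx : x ∈ Ω)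
    (c c' : ℂ) (a b : E) :
    wOp c (wOp c' u b) a x = wOp c' (wOp c u a) b x := by
  show (1/2 : ℂ) * (dD (wOp c' u b) a x + c * Complex.I * dD (wOp c' u b) (Complex.I • a) x)
      = (1/2 : ℂ) * (dD (wOp c u a) b x + c' * Complex.I * dD (wOp c u a) (Complex.I • b) x)
  rw [dD_wOp hΩ hu hx, dD_wOp hΩ hu hx, dD_wOp hΩ hu hx, dD_wOp hΩ hu hx,
    dD_swap hΩ hu hx a b, dD_swap hΩ hu hx a (Complex.I • b),
    dD_swap hΩ hu hx (Complex.I • a) b, dD_swap hΩ hu hx (Complex.I • a) (Complex.I • b)]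
  ring

end lin

section chain

variable {M : Type*} [NormedAddCommGroup M] [NormedSpace ℂ M]
variable {x e : E}

/-- the `M`-valued Wirtinger combination of real directional derivatives -/
def wOpm (c : ℂ) (v : E → M) (e : E) (x : E) : M :=
  (1/2 : ℂ) • (dD v e x + (c * Complex.I) • dD v (Complex.I • e) x)

theorem wOp_comp_clm {v : E → M} (hv : DifferentiableAt ℝ v x) {F' : M → ℂ} {L : M →L[ℂ] ℂ}
    (hF : HasFDerivAt F' L (v x)) (c : ℂ) (e : E) :
    wOp c (fun y => F' (v y)) e x = L (wOpm c v e x) := by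
  have hDa : ∀ a, dD (fun y => F' (v y)) a x = L (dD v a x) := by
    intro a
    show fderiv ℝ (F' ∘ v) x a = _
    rw [((hF.restrictScalars ℝ).comp x hv.hasFDerivAt).fderiv]
    rfl
  show (1/2 : ℂ) * (dD (fun y => F' (v y)) e x
      + c * Complex.I * dD (fun y => F' (v y)) (Complex.I • e) x) = _
  rw [hDa, hDa]
  unfold wOpm
  rw [map_smul, map_add, map_smul]
  simp only [smul_eq_mul]
  try ring

theorem wOp_comp_deriv {w : E → ℂ} {h : ℂ → ℂ} {h' : ℂ}
    (hw : DifferentiableAt ℝ w x) (hh : HasDerivAt h h' (w x)) (c : ℂ) (e : E) :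
    wOp c (fun y => h (w y)) e x = h' * wOp c w e x := by
  have hDa : ∀ a, dD (fun y => h (w y)) a x = dD w a x * h' := by
    intro a
    show fderiv ℝ (h ∘ w) x a = _
    rw [((hh.hasFDerivAt.restrictScalars ℝ).comp x hw.hasFDerivAt).fderiv]
    simp only [ContinuousLinearMap.coe_comp', Function.comp_apply,
      ContinuousLinearMap.coe_restrictScalars', ContinuousLinearMap.smulRight_apply,
      ContinuousLinearMap.one_apply, smul_eq_mul]
    rfl
  show (1/2 : ℂ) * (dD (fun y => h (w y)) e x
      + c * Complex.I * dD (fun y => h (w y)) (Complex.I • e) x) = _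
  rw [hDa, hDa]
  unfold wOp
  ring

variable {ι κ : Type*} [Fintype ι] [Fintype κ]

theorem dD_pi2 {v : E → ι → κ → ℂ} (hv : DifferentiableAt ℝ v x) (a : E) (i : ι) (j : κ) :
    dD v a x i j = dD (fun y => v y i j) a x := by
  have h1 : dD (fun y => v y i) a x = dD v a x i :=
    dD_clm (ContinuousLinearMap.proj i) hv a
  have hvi : DifferentiableAt ℝ (fun y => v y i) x :=
    (ContinuousLinearMap.proj i : (ι → κ → ℂ) →L[ℝ] (κ → ℂ)).differentiableAt.comp x hv
  have h2 : dD (fun y => v y i j) a x = dD (fun y => v y i) a x j :=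
    dD_clm (ContinuousLinearMap.proj j) hvi a
  rw [h2, h1]

theorem wOpm_apply {v : E → ι → κ → ℂ} (hv : DifferentiableAt ℝ v x) (c : ℂ) (e : E)
    (i : ι) (j : κ) :
    wOpm c v e x i j = wOp c (fun y => v y i j) e x := by
  unfold wOpm wOp
  simp only [Pi.smul_apply, Pi.add_apply, smul_eq_mul]
  rw [dD_pi2 hv, dD_pi2 hv]

end chain

section det

def detL (m : ℕ) : MultilinearMap ℂ (fun _ : Fin m => (Fin m → ℂ)) ℂ :=
  (Matrix.detRowAlternating : (Fin m → ℂ) [⋀^Fin m]→ₗ[ℂ] ℂ).toMultilinearMap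

theorem detL_apply (m : ℕ) (v : Fin m → Fin m → ℂ) : detL m v = (Matrix.of v).det := rfl

theorem detL_bound (m : ℕ) (v : Fin m → Fin m → ℂ) :
    ‖detL m v‖ ≤ (m.factorial : ℝ) * ∏ i, ‖v i‖ := by
  rw [detL_apply, Matrix.det_apply]
  refine (norm_sum_le _ _).trans ?_
  have hterm : ∀ σ : Equiv.Perm (Fin m),
      ‖Equiv.Perm.sign σ • ∏ i, Matrix.of v (σ i) i‖ ≤ ∏ i, ‖v i‖ := by
    intro σ
    have h1 : ‖Equiv.Perm.sign σ • ∏ i, Matrix.of v (σ i) i‖ = ‖∏ i, v (σ i) i‖ := by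
      rcases Int.units_eq_one_or (Equiv.Perm.sign σ) with h | h <;> simp [h]
    rw [h1, norm_prod]
    calc ∏ i, ‖v (σ i) i‖ ≤ ∏ i, ‖v (σ i)‖ := by
          apply Finset.prod_le_prod (fun i _ => norm_nonneg _)
          exact fun i _ => norm_le_pi_norm (v (σ i)) i
    _ = ∏ i, ‖v i‖ := Equiv.prod_comp σ (fun i => ‖v i‖)
  refine (Finset.sum_le_sum (fun σ _ => hterm σ)).trans ?_
  rw [Finset.sum_const, nsmul_eq_mul]
  simp [Fintype.card_perm]

def detCM (m : ℕ) : ContinuousMultilinearMap ℂ (fun _ : Fin m => (Fin m → ℂ)) ℂ :=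
  (detL m).mkContinuous (m.factorial : ℝ) (detL_bound m)

theorem detCM_apply (m : ℕ) (v : Fin m → Fin m → ℂ) : detCM m v = (Matrix.of v).det := rfl

theorem detCM_single (m : ℕ) (A : Fin m → Fin m → ℂ) (i j : Fin m) :
    detCM m (Function.update A i (Pi.single j 1)) = (Matrix.of A).adjugate j i := by
  rw [detCM_apply, Matrix.adjugate_apply]
  rfl

theorem row_eq_sum (m : ℕ) (w : Fin m → ℂ) :
    w = ∑ j, w j • (Pi.single j (1:ℂ) : Fin m → ℂ) := by
  have h := pi_eq_sum_univ w
  convert h using 2 with j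
  funext k
  simp [Pi.single_apply, eq_comm]

theorem detCM_map_update_sum (m : ℕ) {α : Type*} (t : Finset α) (i : Fin m)
    (g : α → (Fin m → ℂ)) (A : Fin m → Fin m → ℂ) :
    detCM m (Function.update A i (∑ a ∈ t, g a)) = ∑ a ∈ t, detCM m (Function.update A i (g a)) :=
  (detCM m).toMultilinearMap.map_update_sum t i g A

theorem detCM_update_expand (m : ℕ) (A : Fin m → Fin m → ℂ) (i : Fin m) (w : Fin m → ℂ) :
    detCM m (Function.update A i w) = ∑ j, w j * (Matrix.of A).adjugate j i := by
  conv_lhs => rw [row_eq_sum m w]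
  rw [detCM_map_update_sum m Finset.univ i
    (fun j => w j • (Pi.single j (1:ℂ) : Fin m → ℂ)) A]
  refine Finset.sum_congr rfl fun j _ => ?_
  show detCM m (Function.update A i (w j • (Pi.single j (1:ℂ) : Fin m → ℂ))) = _
  rw [(detCM m).map_update_smul A i (w j) (Pi.single j (1:ℂ)), detCM_single, smul_eq_mul]

end det

end I2Aux

namespace I2Aux

/-- metric entries in `wOp` form -/
def Gf (n : ℕ) (Φ : Etz n → ℝ) : Etz n → Fin n → Fin n → ℂ :=
  fun y i j => wOp (-1) (wOp 1 (fun p => (Φ p : ℂ)) (dz n j)) (dz n i) y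

/-- `t̄`-derivative of the metric entries -/
def Wb (n : ℕ) (Φ : Etz n → ℝ) : Etz n → Fin n → Fin n → ℂ :=
  fun y i j => wOp 1 (fun z => Gf n Φ z i j) (dt n) y

/-- mixed second derivative `∂²g_{ij̄}/∂z^γ∂t̄` at `p₀` -/
def Tm (n : ℕ) (Φ : Etz n → ℝ) (p₀ : Etz n) : Fin n → Fin n → Fin n → ℂ :=
  fun γ i j => wOp (-1) (fun y => Wb n Φ y i j) (dz n γ) p₀

/-- the determinant of the metric -/
def dGF (n : ℕ) (Φ : Etz n → ℝ) : Etz n → ℂ := fun y => detCM n (Gf n Φ y)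

/-- real part of the determinant -/
def rF (n : ℕ) (Φ : Etz n → ℝ) : Etz n → ℝ := fun y => (dGF n Φ y).re

/-- complex lift of `log det g` -/
def LcF (n : ℕ) (Φ : Etz n → ℝ) : Etz n → ℂ := fun p => ((Real.log (rF n Φ p) : ℝ) : ℂ)

/-- first variation of the determinant as a function -/
def BfF (n : ℕ) (Φ : Etz n → ℝ) : Etz n → ℂ :=
  fun x => ∑ i, detCM n (Function.update (Gf n Φ x) i (Wb n Φ x i))

theorem sum4_reorder {β : Type*} [AddCommMonoid β] {k : ℕ}
    (f : Fin k → Fin k → Fin k → Fin k → β) :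
    (∑ i, ∑ j, ∑ α, ∑ γ, f i j α γ) = ∑ α, ∑ γ, ∑ i, ∑ j, f i j α γ := by
  calc (∑ i, ∑ j, ∑ α, ∑ γ, f i j α γ)
      = ∑ i, ∑ α, ∑ j, ∑ γ, f i j α γ :=
        Finset.sum_congr rfl fun i _ => Finset.sum_comm
    _ = ∑ α, ∑ i, ∑ j, ∑ γ, f i j α γ := Finset.sum_comm
    _ = ∑ α, ∑ i, ∑ γ, ∑ j, f i j α γ :=
        Finset.sum_congr rfl fun α _ => Finset.sum_congr rfl fun i _ => Finset.sum_comm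
    _ = ∑ α, ∑ γ, ∑ i, ∑ j, f i j α γ :=
        Finset.sum_congr rfl fun α _ => Finset.sum_comm

end I2Aux

open I2Aux

/-- **Evaluation of the term `I₂` (section 3.2).**
In geodesic coordinates at `p₀` and with the Monge–Ampère equation `log det g = Φ - ψ`,
`Σ g^{j̄i} g^{ᾱγ} g_{tᾱ} ∂²g_{γt̄}/∂z^i∂z̄^j = Σ g_{tᾱ} g^{ᾱγ} (g_{γt̄} - ∂²ψ/∂z^γ∂t̄)` at `p₀`. -/
theorem evaluation_I2 (n : ℕ) (hn : 1 ≤ n) (Ω : Set (Etz n)) (hΩ : IsOpen Ω)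
    (Φ : Etz n → ℝ) (hΦ : ContDiffOn ℝ (⊤ : ℕ∞) Φ Ω)
    (hpos : ∀ x ∈ Ω, (gmet Φ x).PosDef)
    (ψ : Etz n → ℝ) (hψ : ContDiffOn ℝ (⊤ : ℕ∞) ψ Ω)
    (hMA : ∀ x ∈ Ω, Real.log ((gmet Φ x).det.re) = Φ x - ψ x)
    (p₀ : Etz n) (hp₀ : p₀ ∈ Ω)
    (hgeo : ∀ i j k : Fin n, wD (fun y => gmet Φ y i j) (dz n k) p₀ = 0) :
    ∑ i, ∑ j, ∑ α, ∑ γ, ginv Φ p₀ j i * ginv Φ p₀ α γ *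
        wD (wDbar (fun p => (Φ p : ℂ)) (dz n α)) (dt n) p₀ *
        wD (wDbar (fun y => wD (wDbar (fun p => (Φ p : ℂ)) (dt n)) (dz n γ) y) (dz n j)) (dz n i) p₀
      = ∑ α, ∑ γ,
          wD (wDbar (fun p => (Φ p : ℂ)) (dz n α)) (dt n) p₀ * ginv Φ p₀ α γ *
            (wD (wDbar (fun p => (Φ p : ℂ)) (dt n)) (dz n γ) p₀
              - wD (wDbar (fun p => (ψ p : ℂ)) (dt n)) (dz n γ) p₀) := by
  classical
  -- basic smoothness
  have hu : SmOn (fun p => (Φ p : ℂ)) Ω := fun x hx =>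
    Complex.ofRealCLM.contDiff.contDiffAt.comp x (hΦ.contDiffAt (hΩ.mem_nhds hx))
  have huψ : SmOn (fun p => (ψ p : ℂ)) Ω := fun x hx =>
    Complex.ofRealCLM.contDiff.contDiffAt.comp x (hψ.contDiffAt (hΩ.mem_nhds hx))
  -- metric entries
  have hGf_eq : ∀ (y : Etz n) (i j : Fin n), gmet Φ y i j = Gf n Φ y i j := by
    intro y i j
    show wD (wDbar (fun p => (Φ p : ℂ)) (dz n j)) (dz n i) y = Gf n Φ y i j
    rw [wD_wDbar_eq_wOp]
    rfl
  have hgmet_eq : ∀ y, gmet Φ y = Matrix.of (Gf n Φ y) := by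
    intro y; ext i j; exact hGf_eq y i j
  have hGent : ∀ i j, SmOn (fun y => Gf n Φ y i j) Ω :=
    fun i j => wOp_smOn (wOp_smOn hu 1 (dz n j)) (-1) (dz n i)
  have hGv : SmOn (Gf n Φ) Ω := by
    intro x hx
    rw [contDiffAt_pi]; intro i
    rw [contDiffAt_pi]; intro j
    exact hGent i j x hx
  have hWent : ∀ i j, SmOn (fun y => Wb n Φ y i j) Ω :=
    fun i j => wOp_smOn (hGent i j) 1 (dt n)
  -- determinant facts
  have hdG_eq : ∀ y, dGF n Φ y = (gmet Φ y).det := by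
    intro y
    show detCM n (Gf n Φ y) = _
    rw [detCM_apply, hgmet_eq y]
  have hdG_sm : SmOn (dGF n Φ) Ω := fun x hx =>
    (((detCM n).contDiff).restrict_scalars ℝ).contDiffAt.comp x (hGv x hx)
  have hdet_pos : ∀ x ∈ Ω, 0 < rF n Φ x := by
    intro x hx
    have h := (hpos x hx).det_pos
    rw [Complex.lt_def] at h
    have hre : rF n Φ x = (gmet Φ x).det.re := by
      show (dGF n Φ x).re = _
      rw [hdG_eq x]
    rw [hre]
    simpa using h.1
  have hdet_im : ∀ x ∈ Ω, (dGF n Φ x).im = 0 := by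
    intro x hx
    have h := (hpos x hx).det_pos
    rw [Complex.lt_def] at h
    rw [hdG_eq x]
    simpa using h.2.symm
  have hdet_real : ∀ x ∈ Ω, dGF n Φ x = ((rF n Φ x : ℝ) : ℂ) := by
    intro x hx
    apply Complex.ext
    · rfl
    · simp [hdet_im x hx]
  have hdet_ne : ∀ x ∈ Ω, dGF n Φ x ≠ 0 := by
    intro x hx h0
    have h1 := hdet_pos x hx
    rw [show rF n Φ x = (dGF n Φ x).re from rfl, h0] at h1
    simp at h1
  have hr_sm : SmOn (rF n Φ) Ω := fun x hx =>
    Complex.reCLM.contDiff.contDiffAt.comp x (hdG_sm x hx)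
  -- first derivative of log det
  have hdd_det : ∀ x ∈ Ω, ∀ a, dD (dGF n Φ) a x = ((dD (rF n Φ) a x : ℝ) : ℂ) := by
    intro x hx a
    have h1 : dD (dGF n Φ) a x = dD (fun y => ((rF n Φ y : ℝ) : ℂ)) a x :=
      dD_congr hΩ hx (fun y hy => hdet_real y hy) a
    rw [h1]
    exact dD_clm Complex.ofRealCLM (hr_sm.diffAt hx) a
  have hC1 : ∀ x ∈ Ω, ∀ a, dD (LcF n Φ) a x = (dGF n Φ x)⁻¹ * dD (dGF n Φ) a x := by
    intro x hx a
    have hlog : HasFDerivAt (fun y => Real.log (rF n Φ y))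
        ((rF n Φ x)⁻¹ • fderiv ℝ (rF n Φ) x) x :=
      (Real.hasDerivAt_log (ne_of_gt (hdet_pos x hx))).comp_hasFDerivAt x
        (hr_sm.diffAt hx).hasFDerivAt
    have h2 : dD (fun y => Real.log (rF n Φ y)) a x = (rF n Φ x)⁻¹ * dD (rF n Φ) a x := by
      show fderiv ℝ (fun y => Real.log (rF n Φ y)) x a = _
      rw [hlog.fderiv]
      rfl
    calc dD (LcF n Φ) a x
        = ((dD (fun y => Real.log (rF n Φ y)) a x : ℝ) : ℂ) :=
          dD_clm Complex.ofRealCLM hlog.differentiableAt a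
      _ = (((rF n Φ x)⁻¹ * dD (rF n Φ) a x : ℝ) : ℂ) := by rw [h2]
      _ = (dGF n Φ x)⁻¹ * dD (dGF n Φ) a x := by
          rw [hdd_det x hx a, hdet_real x hx]
          push_cast
          ring
  have hC2 : ∀ x ∈ Ω, wOp 1 (LcF n Φ) (dt n) x
      = (dGF n Φ x)⁻¹ * wOp 1 (dGF n Φ) (dt n) x := by
    intro x hx
    unfold wOp
    rw [hC1 x hx (dt n), hC1 x hx (Complex.I • dt n)]
    ring
  have hC3 : ∀ x ∈ Ω, ∀ (c : ℂ) (e : Etz n),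
      wOp c (dGF n Φ) e x = (detCM n).linearDeriv (Gf n Φ x) (wOpm c (Gf n Φ) e x) :=
    fun x hx c e => wOp_comp_clm (hGv.diffAt hx) ((detCM n).hasFDerivAt (Gf n Φ x)) c e
  have hWbm : ∀ x ∈ Ω, wOpm 1 (Gf n Φ) (dt n) x = Wb n Φ x := by
    intro x hx
    funext i j
    rw [wOpm_apply (hGv.diffAt hx) 1 (dt n) i j]
    rfl
  have hKeyΩ : ∀ x ∈ Ω, wOp 1 (LcF n Φ) (dt n) x = (dGF n Φ x)⁻¹ * BfF n Φ x := by
    intro x hx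
    rw [hC2 x hx, hC3 x hx 1 (dt n), hWbm x hx,
      ContinuousMultilinearMap.linearDeriv_apply]
    rfl
  -- geodesic condition in wOp form
  have hgeo' : ∀ i j k, wOp (-1) (fun y => Gf n Φ y i j) (dz n k) p₀ = 0 := by
    intro i j k
    have h := hgeo i j k
    have he : (fun y => gmet Φ y i j) = fun y => Gf n Φ y i j :=
      funext fun y => hGf_eq y i j
    rw [he, wD_eq_wOp] at h
    exact h
  -- derivative of det vanishes in the z-directions at p₀
  have hdet_z : ∀ γ, wOp (-1) (dGF n Φ) (dz n γ) p₀ = 0 := by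
    intro γ
    rw [hC3 p₀ hp₀ (-1) (dz n γ)]
    have h0 : wOpm (-1) (Gf n Φ) (dz n γ) p₀ = 0 := by
      funext i j
      rw [wOpm_apply (hGv.diffAt hp₀) (-1) (dz n γ) i j]
      simp only [Pi.zero_apply]
      exact hgeo' i j γ
    rw [h0, map_zero]
  have hinv_z : ∀ γ, wOp (-1) (fun y => (dGF n Φ y)⁻¹) (dz n γ) p₀ = 0 := by
    intro γ
    rw [wOp_comp_deriv (hdG_sm.diffAt hp₀) (hasDerivAt_inv (hdet_ne p₀ hp₀)) (-1) (dz n γ),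
      hdet_z γ, mul_zero]
  -- the update maps
  have hvi_sm : ∀ i : Fin n, SmOn (fun x => Function.update (Gf n Φ x) i (Wb n Φ x i)) Ω := by
    intro i x hx
    rw [contDiffAt_pi]
    intro k
    by_cases hk : k = i
    · subst hk
      have he : (fun x => Function.update (Gf n Φ x) k (Wb n Φ x k) k)
          = fun x => Wb n Φ x k := by
        funext x; rw [Function.update_self]
      rw [he, contDiffAt_pi]
      intro j
      exact hWent k j x hx
    · have he : (fun x => Function.update (Gf n Φ x) i (Wb n Φ x i) k)
          = fun x => Gf n Φ x k := by
        funext x; rw [Function.update_of_ne hk]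
      rw [he, contDiffAt_pi]
      intro j
      exact hGent k j x hx
  have hSi_sm : ∀ i : Fin n,
      SmOn (fun x => detCM n (Function.update (Gf n Φ x) i (Wb n Φ x i))) Ω :=
    fun i x hx => (((detCM n).contDiff).restrict_scalars ℝ).contDiffAt.comp x (hvi_sm i x hx)
  -- derivative of each first-variation term at p₀
  have hSi_z : ∀ (γ i : Fin n),
      wOp (-1) (fun x => detCM n (Function.update (Gf n Φ x) i (Wb n Φ x i))) (dz n γ) p₀
        = detCM n (Function.update (Gf n Φ p₀) i (fun j => Tm n Φ p₀ γ i j)) := by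
    intro γ i
    rw [wOp_comp_clm ((hvi_sm i).diffAt hp₀) ((detCM n).hasFDerivAt _) (-1) (dz n γ),
      ContinuousMultilinearMap.linearDeriv_apply]
    have hval : ∀ k, wOpm (-1) (fun x => Function.update (Gf n Φ x) i (Wb n Φ x i))
        (dz n γ) p₀ k = if k = i then (fun j => Tm n Φ p₀ γ i j) else 0 := by
      intro k
      by_cases hk : k = i
      · subst hk
        rw [if_pos rfl]
        funext j
        rw [wOpm_apply ((hvi_sm k).diffAt hp₀) (-1) (dz n γ) k j]
        simp only [Function.update_self]
        rfl
      · rw [if_neg hk]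
        funext j
        rw [wOpm_apply ((hvi_sm i).diffAt hp₀) (-1) (dz n γ) k j]
        simp only [Function.update_of_ne hk, Pi.zero_apply]
        exact hgeo' k j γ
    have hzero : ∀ k ∈ Finset.univ (α := Fin n), k ≠ i →
        detCM n (Function.update (Function.update (Gf n Φ p₀) i (Wb n Φ p₀ i)) k
          (wOpm (-1) (fun x => Function.update (Gf n Φ x) i (Wb n Φ x i)) (dz n γ) p₀ k))
          = 0 := by
      intro k _ hk
      rw [hval k, if_neg hk]
      exact (detCM n).map_coord_zero k (Function.update_self k 0 _)
    rw [Finset.sum_eq_single_of_mem i (Finset.mem_univ i) hzero, hval i, if_pos rfl,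
      Function.update_idem]
  -- differentiability of the pieces at p₀
  have hBf_term_diff : ∀ i : Fin n, DifferentiableAt ℝ
      (fun x => detCM n (Function.update (Gf n Φ x) i (Wb n Φ x i))) p₀ :=
    fun i => (hSi_sm i).diffAt hp₀
  have hBf_diff : DifferentiableAt ℝ (BfF n Φ) p₀ :=
    DifferentiableAt.fun_sum (fun i _ => hBf_term_diff i)
  have hinv_diff : DifferentiableAt ℝ (fun y => (dGF n Φ y)⁻¹) p₀ :=
    (hdG_sm.diffAt hp₀).inv (hdet_ne p₀ hp₀)
  have hBf_z : ∀ γ, wOp (-1) (BfF n Φ) (dz n γ) p₀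
      = ∑ i, detCM n (Function.update (Gf n Φ p₀) i (fun j => Tm n Φ p₀ γ i j)) := by
    intro γ
    rw [show (BfF n Φ) = fun x => ∑ i,
        detCM n (Function.update (Gf n Φ x) i (Wb n Φ x i)) from rfl]
    rw [wOp_sum (fun i _ => hBf_term_diff i) (-1) (dz n γ)]
    exact Finset.sum_congr rfl fun i _ => hSi_z γ i
  -- the main step at p₀
  have hstep : ∀ γ, wOp (-1) (wOp 1 (LcF n Φ) (dt n)) (dz n γ) p₀
      = (dGF n Φ p₀)⁻¹
        * ∑ i, detCM n (Function.update (Gf n Φ p₀) i (fun j => Tm n Φ p₀ γ i j)) := by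
    intro γ
    have h1 : wOp (-1) (wOp 1 (LcF n Φ) (dt n)) (dz n γ) p₀
        = wOp (-1) (fun x => (dGF n Φ x)⁻¹ * BfF n Φ x) (dz n γ) p₀ :=
      wOp_congr hΩ hp₀ (fun y hy => hKeyΩ y hy) (-1) (dz n γ)
    rw [h1, wOp_mul hinv_diff hBf_diff (-1) (dz n γ), hinv_z γ, hBf_z γ, zero_mul, zero_add]
  -- expansion in terms of the inverse metric
  have hginv : ∀ i j : Fin n, (dGF n Φ p₀)⁻¹ * (gmet Φ p₀).adjugate j i = ginv Φ p₀ j i := by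
    intro i j
    rw [ginv, Matrix.inv_def, Matrix.smul_apply, smul_eq_mul, Ring.inverse_eq_inv, hdG_eq p₀]
  have hexp : ∀ γ, (dGF n Φ p₀)⁻¹
        * (∑ i, detCM n (Function.update (Gf n Φ p₀) i (fun j => Tm n Φ p₀ γ i j)))
      = ∑ i, ∑ j, ginv Φ p₀ j i * Tm n Φ p₀ γ i j := by
    intro γ
    rw [Finset.mul_sum]
    refine Finset.sum_congr rfl fun i _ => ?_
    rw [detCM_update_expand n (Gf n Φ p₀) i (fun j => Tm n Φ p₀ γ i j), Finset.mul_sum,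
      ← hgmet_eq p₀]
    refine Finset.sum_congr rfl fun j _ => ?_
    rw [← hginv i j]
    ring
  -- the Monge–Ampère side
  have hLc_eq : ∀ x ∈ Ω, LcF n Φ x = ((Φ x : ℂ)) - ((ψ x : ℂ)) := by
    intro x hx
    show ((Real.log (rF n Φ x) : ℝ) : ℂ) = _
    have hre : rF n Φ x = (gmet Φ x).det.re := by
      show (dGF n Φ x).re = _
      rw [hdG_eq x]
    rw [hre, hMA x hx]
    push_cast
    ring
  have hu_dt_diff : DifferentiableAt ℝ (wOp 1 (fun p => (Φ p : ℂ)) (dt n)) p₀ :=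
    (wOp_smOn hu 1 (dt n)).diffAt hp₀
  have huψ_dt_diff : DifferentiableAt ℝ (wOp 1 (fun p => (ψ p : ℂ)) (dt n)) p₀ :=
    (wOp_smOn huψ 1 (dt n)).diffAt hp₀
  have hLdiff : ∀ γ, wOp (-1) (wOp 1 (LcF n Φ) (dt n)) (dz n γ) p₀
      = wOp (-1) (wOp 1 (fun p => (Φ p : ℂ)) (dt n)) (dz n γ) p₀
        - wOp (-1) (wOp 1 (fun p => (ψ p : ℂ)) (dt n)) (dz n γ) p₀ := by
    intro γ
    have h1 : ∀ x ∈ Ω, wOp 1 (LcF n Φ) (dt n) x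
        = wOp 1 (fun p => (Φ p : ℂ)) (dt n) x - wOp 1 (fun p => (ψ p : ℂ)) (dt n) x := by
      intro x hx
      rw [wOp_congr hΩ hx (fun y hy => hLc_eq y hy) 1 (dt n)]
      exact wOp_sub (hu.diffAt hx) (huψ.diffAt hx) 1 (dt n)
    rw [wOp_congr hΩ hp₀ h1 (-1) (dz n γ)]
    exact wOp_sub hu_dt_diff huψ_dt_diff (-1) (dz n γ)
  -- the key identity
  have hKey : ∀ γ, (∑ i, ∑ j, ginv Φ p₀ j i * Tm n Φ p₀ γ i j)
      = wD (wDbar (fun p => (Φ p : ℂ)) (dt n)) (dz n γ) p₀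
        - wD (wDbar (fun p => (ψ p : ℂ)) (dt n)) (dz n γ) p₀ := by
    intro γ
    rw [wD_wDbar_eq_wOp, wD_wDbar_eq_wOp, ← hexp γ, ← hstep γ, hLdiff γ]
  -- commutation of derivatives
  have hcomm : ∀ (γ i j : Fin n),
      wD (wDbar (fun y => wD (wDbar (fun p => (Φ p : ℂ)) (dt n)) (dz n γ) y) (dz n j))
        (dz n i) p₀ = Tm n Φ p₀ γ i j := by
    intro γ i j
    have e1 : (fun y => wD (wDbar (fun p => (Φ p : ℂ)) (dt n)) (dz n γ) y)
        = wOp (-1) (wOp 1 (fun p => (Φ p : ℂ)) (dt n)) (dz n γ) := by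
      funext y
      rw [wD_wDbar_eq_wOp]
    rw [e1, wD_wDbar_eq_wOp]
    have hPsm : SmOn (wOp 1 (fun p => (Φ p : ℂ)) (dt n)) Ω := wOp_smOn hu 1 (dt n)
    have hQsm : SmOn (wOp 1 (fun p => (Φ p : ℂ)) (dz n j)) Ω := wOp_smOn hu 1 (dz n j)
    have hRsm : SmOn (wOp 1 (wOp 1 (fun p => (Φ p : ℂ)) (dz n j)) (dt n)) Ω :=
      wOp_smOn hQsm 1 (dt n)
    have s1 : ∀ x ∈ Ω,
        wOp 1 (wOp (-1) (wOp 1 (fun p => (Φ p : ℂ)) (dt n)) (dz n γ)) (dz n j) x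
          = wOp (-1) (wOp 1 (wOp 1 (fun p => (Φ p : ℂ)) (dz n j)) (dt n)) (dz n γ) x := by
      intro x hx
      calc wOp 1 (wOp (-1) (wOp 1 (fun p => (Φ p : ℂ)) (dt n)) (dz n γ)) (dz n j) x
          = wOp (-1) (wOp 1 (wOp 1 (fun p => (Φ p : ℂ)) (dt n)) (dz n j)) (dz n γ) x :=
            wOp_comm hΩ hPsm hx 1 (-1) (dz n j) (dz n γ)
        _ = wOp (-1) (wOp 1 (wOp 1 (fun p => (Φ p : ℂ)) (dz n j)) (dt n)) (dz n γ) x :=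
            wOp_congr hΩ hx (fun y hy => wOp_comm hΩ hu hy 1 1 (dz n j) (dt n)) (-1) (dz n γ)
    have s2 : ∀ x ∈ Ω,
        wOp (-1) (wOp 1 (wOp 1 (fun p => (Φ p : ℂ)) (dz n j)) (dt n)) (dz n i) x
          = wOp 1 (wOp (-1) (wOp 1 (fun p => (Φ p : ℂ)) (dz n j)) (dz n i)) (dt n) x :=
      fun x hx => wOp_comm hΩ hQsm hx (-1) 1 (dz n i) (dt n)
    calc wOp (-1) (wOp 1 (wOp (-1) (wOp 1 (fun p => (Φ p : ℂ)) (dt n)) (dz n γ)) (dz n j))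
          (dz n i) p₀
        = wOp (-1) (wOp (-1) (wOp 1 (wOp 1 (fun p => (Φ p : ℂ)) (dz n j)) (dt n)) (dz n γ))
            (dz n i) p₀ := wOp_congr hΩ hp₀ s1 (-1) (dz n i)
      _ = wOp (-1) (wOp (-1) (wOp 1 (wOp 1 (fun p => (Φ p : ℂ)) (dz n j)) (dt n)) (dz n i))
            (dz n γ) p₀ := wOp_comm hΩ hRsm hp₀ (-1) (-1) (dz n i) (dz n γ)
      _ = wOp (-1) (wOp 1 (wOp (-1) (wOp 1 (fun p => (Φ p : ℂ)) (dz n j)) (dz n i)) (dt n))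
            (dz n γ) p₀ := wOp_congr hΩ hp₀ s2 (-1) (dz n γ)
      _ = Tm n Φ p₀ γ i j := rfl
  -- final assembly
  calc (∑ i, ∑ j, ∑ α, ∑ γ, ginv Φ p₀ j i * ginv Φ p₀ α γ *
        wD (wDbar (fun p => (Φ p : ℂ)) (dz n α)) (dt n) p₀ *
        wD (wDbar (fun y => wD (wDbar (fun p => (Φ p : ℂ)) (dt n)) (dz n γ) y) (dz n j))
          (dz n i) p₀)
      = ∑ i, ∑ j, ∑ α, ∑ γ, ginv Φ p₀ j i * ginv Φ p₀ α γ *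
          wD (wDbar (fun p => (Φ p : ℂ)) (dz n α)) (dt n) p₀ * Tm n Φ p₀ γ i j := by
        refine Finset.sum_congr rfl fun i _ => Finset.sum_congr rfl fun j _ =>
          Finset.sum_congr rfl fun α _ => Finset.sum_congr rfl fun γ _ => ?_
        rw [hcomm γ i j]
    _ = ∑ α, ∑ γ, ∑ i, ∑ j, ginv Φ p₀ j i * ginv Φ p₀ α γ *
          wD (wDbar (fun p => (Φ p : ℂ)) (dz n α)) (dt n) p₀ * Tm n Φ p₀ γ i j :=
        sum4_reorder _
    _ = ∑ α, ∑ γ, wD (wDbar (fun p => (Φ p : ℂ)) (dz n α)) (dt n) p₀ * ginv Φ p₀ α γ *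
          (∑ i, ∑ j, ginv Φ p₀ j i * Tm n Φ p₀ γ i j) := by
        refine Finset.sum_congr rfl fun α _ => Finset.sum_congr rfl fun γ _ => ?_
        rw [Finset.mul_sum]
        refine Finset.sum_congr rfl fun i _ => ?_
        rw [Finset.mul_sum]
        refine Finset.sum_congr rfl fun j _ => ?_
        ring
    _ = ∑ α, ∑ γ,
          wD (wDbar (fun p => (Φ p : ℂ)) (dz n α)) (dt n) p₀ * ginv Φ p₀ α γ *
            (wD (wDbar (fun p => (Φ p : ℂ)) (dt n)) (dz n γ) p₀
              - wD (wDbar (fun p => (ψ p : ℂ)) (dt n)) (dz n γ) p₀) := by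
        refine Finset.sum_congr rfl fun α _ => Finset.sum_congr rfl fun γ _ => ?_
        rw [hKey γ]

end
end
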